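/- The generating function identity: the sum over n ≥ 0 of P(n,1) q^n equals (-q;q)_∞ · ∑_{k≥1} q^{2k}/(1+q^k). -/

import Mathlib

/-- The number of missing integers of a partition: positive integers less than
the largest part which do not occur as a part. -/
def missingCount {n : ℕ} (π : n.Partition) : ℕ :=
  ((Finset.Ico 1 π.parts.sup).filter (fun j => j ∉ π.parts)).card

/-- `Pcount n m` is the number of partitions of `n` with exactly `m` missing integers. -/
def Pcount (n m : ℕ) : ℕ := Fintype.card {π : n.Partition // missingCount π = m}


namespace OneGap
open Multiset


/-- number of elements of `X` that are `≥ j` -/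
def rk (X : Multiset ℕ) (j : ℕ) : ℕ := Multiset.countP (fun a => j ≤ a) X

lemma rk_zero (j : ℕ) : rk 0 j = 0 := rfl

lemma rk_cons (a : ℕ) (X : Multiset ℕ) (j : ℕ) :
    rk (a ::ₘ X) j = rk X j + if j ≤ a then 1 else 0 := by
  simp [rk, Multiset.countP_cons]

lemma rk_anti (X : Multiset ℕ) {j j' : ℕ} (h : j ≤ j') : rk X j' ≤ rk X j := by
  induction X using Multiset.induction with
  | empty => simp [rk_zero]
  | cons a X ih =>
    rw [rk_cons, rk_cons]
    have : (if j' ≤ a then 1 else 0) ≤ (if j ≤ a then 1 else 0) := by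
      split <;> split <;> omega
    omega

lemma rk_pos_iff (X : Multiset ℕ) (j : ℕ) : 0 < rk X j ↔ ∃ a ∈ X, j ≤ a := by
  simp [rk, Multiset.countP_pos]

lemma rk_le_card (X : Multiset ℕ) (j : ℕ) : rk X j ≤ Multiset.card X :=
  Multiset.countP_le_card _ _

lemma rk_one (X : Multiset ℕ) (hX : ∀ a ∈ X, 0 < a) : rk X 1 = Multiset.card X := by
  unfold rk
  exact Multiset.countP_eq_card.2 (fun a ha => hX a ha)

lemma rk_succ_add_count (X : Multiset ℕ) (j : ℕ) :
    rk X j = count j X + rk X (j + 1) := by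
  induction X using Multiset.induction with
  | empty => simp [rk_zero]
  | cons a X ih =>
    rw [rk_cons, rk_cons, Multiset.count_cons, ih]
    split <;> split <;> split <;> omega

lemma rk_pos_iff_le_sup (X : Multiset ℕ) {j : ℕ} (hj : 1 ≤ j) :
    0 < rk X j ↔ j ≤ X.sup := by
  rw [rk_pos_iff]
  constructor
  · rintro ⟨a, ha, hja⟩
    exact hja.trans (Multiset.le_sup ha)
  · intro h
    by_contra hc
    push_neg at hc
    have : X.sup ≤ j - 1 := Multiset.sup_le.2 (fun a ha => by have := hc a ha; omega)
    omega

lemma sum_rk (X : Multiset ℕ) : ∀ N, (∀ a ∈ X, a ≤ N) →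
    ∑ j ∈ Finset.range N, rk X (j + 1) = X.sum := by
  induction X using Multiset.induction with
  | empty => simp [rk_zero]
  | cons a X ih =>
    intro N hN
    have hXN : ∀ b ∈ X, b ≤ N := fun b hb => hN b (Multiset.mem_cons_of_mem hb)
    simp only [rk_cons, Finset.sum_add_distrib, ih N hXN, Multiset.sum_cons]
    have : ∑ j ∈ Finset.range N, (if j + 1 ≤ a then 1 else 0) = a := by
      rw [← Finset.card_filter]
      have : (Finset.range N).filter (fun j => j + 1 ≤ a) = Finset.range a := by
        ext j
        simp only [Finset.mem_filter, Finset.mem_range]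
        have := hN a (Multiset.mem_cons_self a X)
        omega
      simp only [Nat.add_one_le_iff] at this
      simp [this]
    omega


def conj (X : Multiset ℕ) : Multiset ℕ :=
  ((Multiset.range X.sum).map (fun j => rk X (j + 1))).filter (0 < ·)

lemma filter_range_multiset (N L : ℕ) (h : L ≤ N) :
    (Multiset.range N).filter (fun j => j + 1 ≤ L) = Multiset.range L := by
  have : ((Finset.range N).filter (fun j => j + 1 ≤ L)) = Finset.range L := by
    ext j; simp only [Finset.mem_filter, Finset.mem_range]; omega
  calc (Multiset.range N).filter (fun j => j + 1 ≤ L)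
      = ((Finset.range N).filter (fun j => j + 1 ≤ L)).val := by
        rw [Finset.filter_val, Finset.range_val]
    _ = Multiset.range L := by rw [this, Finset.range_val]

lemma conj_eq_map_range (X : Multiset ℕ) :
    conj X = (Multiset.range X.sup).map (fun j => rk X (j + 1)) := by
  unfold conj
  rw [Multiset.filter_map]
  have h1 : X.sup ≤ X.sum := Multiset.sup_le.2 (fun a ha => Multiset.le_sum_of_mem ha)
  congr 1
  have : (Multiset.range X.sum).filter ((fun x => 0 < x) ∘ fun j => rk X (j + 1))
      = (Multiset.range X.sum).filter (fun j => j + 1 ≤ X.sup) := by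
    apply Multiset.filter_congr
    intro j _
    simpa using rk_pos_iff_le_sup X (j := j + 1) (by omega)
  rw [this, filter_range_multiset _ _ h1]

lemma card_conj (X : Multiset ℕ) : Multiset.card (conj X) = X.sup := by
  rw [conj_eq_map_range]; simp

lemma mem_conj_pos (X : Multiset ℕ) {b : ℕ} (hb : b ∈ conj X) : 0 < b :=
  Multiset.of_mem_filter hb

lemma sum_conj (X : Multiset ℕ) : (conj X).sum = X.sum := by
  rw [conj_eq_map_range]
  have h1 : ∀ a ∈ X, a ≤ X.sup := fun a ha => Multiset.le_sup ha
  calc ((Multiset.range X.sup).map (fun j => rk X (j + 1))).sum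
      = ∑ j ∈ Finset.range X.sup, rk X (j + 1) := by
        rw [Finset.sum]; rw [Finset.range_val]
    _ = X.sum := sum_rk X _ h1

lemma count_conj (X : Multiset ℕ) (v : ℕ) :
    count v (conj X) = ((Finset.range X.sup).filter (fun j => rk X (j + 1) = v)).card := by
  rw [conj_eq_map_range, Multiset.count_map, Finset.card_def, Finset.filter_val,
    Finset.range_val]
  congr 1
  apply Multiset.filter_congr
  intro j _
  exact eq_comm

lemma rk_conj (X : Multiset ℕ) (v : ℕ) (hv : 1 ≤ v) :
    rk (conj X) v = ((Finset.range X.sup).filter (fun j => v ≤ rk X (j + 1))).card := by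
  rw [conj_eq_map_range]
  unfold rk
  rw [Multiset.countP_map, Finset.card_def, Finset.filter_val, Finset.range_val,
    ← Multiset.countP_eq_card_filter]

-- downward closed filter of range is a range
lemma filter_range_downward (N : ℕ) (p : ℕ → Prop) [DecidablePred p]
    (hp : ∀ i j, i ≤ j → p j → p i) :
    (Finset.range N).filter p = Finset.range ((Finset.range N).filter p).card := by
  induction N with
  | zero => simp
  | succ N ih =>
    rw [Finset.range_add_one, Finset.filter_insert]
    by_cases hN : p N
    · rw [if_pos hN]
      have hall : (Finset.range N).filter p = Finset.range N :=
        Finset.filter_true_of_mem (fun i hi => hp i N (by simpa using (Finset.mem_range.1 hi).le) hN)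
      rw [hall, Finset.card_insert_of_notMem (by simp), Finset.card_range, ← Finset.range_add_one]
    · rw [if_neg hN, ih]; simp

lemma galois (X : Multiset ℕ) {j v : ℕ} (hj : 1 ≤ j) (hv : 1 ≤ v) :
    j ≤ rk (conj X) v ↔ v ≤ rk X j := by
  rw [rk_conj X v hv]
  have hdc : ∀ i i', i ≤ i' → v ≤ rk X (i' + 1) → v ≤ rk X (i + 1) :=
    fun i i' h h' => h'.trans (rk_anti X (by omega))
  have key := filter_range_downward X.sup _ hdc
  constructor
  · intro h
    have : j - 1 ∈ (Finset.range X.sup).filter (fun i => v ≤ rk X (i + 1)) := by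
      rw [key]; exact Finset.mem_range.2 (by omega)
    have := (Finset.mem_filter.1 this).2
    have heq : j - 1 + 1 = j := by omega
    rwa [heq] at this
  · intro h
    have hjsup : j ≤ X.sup := by
      rw [← rk_pos_iff_le_sup X hj]; omega
    have : j - 1 ∈ (Finset.range X.sup).filter (fun i => v ≤ rk X (i + 1)) := by
      refine Finset.mem_filter.2 ⟨Finset.mem_range.2 (by omega), ?_⟩
      have heq : j - 1 + 1 = j := by omega
      rwa [heq]
    rw [key] at this
    have := Finset.mem_range.1 this
    omega


lemma nat_eq_of_le_iff {a b : ℕ} (h : ∀ j, 1 ≤ j → (j ≤ a ↔ j ≤ b)) : a = b := by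
  rcases Nat.eq_zero_or_pos a with ha | ha
  · rcases Nat.eq_zero_or_pos b with hb | hb
    · omega
    · have := (h b hb).2 le_rfl; omega
  · rcases Nat.eq_zero_or_pos b with hb | hb
    · have := (h a ha).1 le_rfl; omega
    · have h1 := (h a ha).1 le_rfl
      have h2 := (h b hb).2 le_rfl
      omega

lemma rk_conj_conj (X : Multiset ℕ) {v : ℕ} (hv : 1 ≤ v) :
    rk (conj (conj X)) v = rk X v := by
  apply nat_eq_of_le_iff
  intro j hj
  rw [galois (conj X) hj hv, galois X hv hj]

lemma count_eq_rk_sub (Y : Multiset ℕ) (v : ℕ) :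
    count v Y = rk Y v - rk Y (v + 1) := by
  have := rk_succ_add_count Y v
  omega

lemma conj_conj (X : Multiset ℕ) (hX : ∀ a ∈ X, 0 < a) : conj (conj X) = X := by
  ext v
  rcases Nat.eq_zero_or_pos v with hv | hv
  · subst hv
    rw [Multiset.count_eq_zero_of_notMem, Multiset.count_eq_zero_of_notMem]
    · intro h; exact absurd (hX 0 h) (by omega)
    · intro h; exact absurd (mem_conj_pos _ h) (by omega)
  · rw [count_eq_rk_sub, count_eq_rk_sub, rk_conj_conj X hv, rk_conj_conj X (by omega)]




lemma sup_conj (X : Multiset ℕ) : (conj X).sup = rk X 1 := by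
  rw [conj_eq_map_range]
  rcases Nat.eq_zero_or_pos X.sup with h0 | hpos
  · rw [h0]
    have : rk X 1 = 0 := by
      by_contra h
      have := (rk_pos_iff_le_sup X le_rfl).1 (by omega)
      omega
    simp [this]
  · apply le_antisymm
    · apply Multiset.sup_le.2
      intro b hb
      obtain ⟨j, _, rfl⟩ := Multiset.mem_map.1 hb
      exact rk_anti X (by omega)
    · apply Multiset.le_sup
      refine Multiset.mem_map.2 ⟨0, ?_, rfl⟩
      rw [Multiset.mem_range]; omega

lemma not_mem_conj_iff (X : Multiset ℕ) {j : ℕ} (hj : 1 ≤ j) :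
    j ∉ conj X ↔ ∀ v, 1 ≤ v → rk X v ≠ j := by
  rw [← Multiset.count_eq_zero, count_conj, Finset.card_eq_zero, Finset.filter_eq_empty_iff]
  constructor
  · intro h v hv hrk
    have hvsup : v ≤ X.sup := (rk_pos_iff_le_sup X hv).1 (by omega)
    refine h (Finset.mem_range.2 (by omega : v - 1 < X.sup)) ?_
    have hv1 : v - 1 + 1 = v := by omega
    rw [hv1]; exact hrk
  · intro h i hi
    exact h (i + 1) (by omega)

section Pair
variable (k : ℕ) (S : Finset ℕ)

def pairMultiset : Multiset ℕ := (k+1) ::ₘ (k+1) ::ₘ S.val.map (· + 1)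

lemma pairMultiset_pos : ∀ a ∈ pairMultiset k S, 0 < a := by
  intro a ha
  rcases Multiset.mem_cons.1 ha with rfl | ha
  · omega
  rcases Multiset.mem_cons.1 ha with rfl | ha
  · omega
  obtain ⟨b, _, rfl⟩ := Multiset.mem_map.1 ha
  omega

lemma pairMultiset_sum : (pairMultiset k S).sum = 2 * (k+1) + ∑ i ∈ S, (i+1) := by
  unfold pairMultiset
  rw [Multiset.sum_cons, Multiset.sum_cons]
  have : (S.val.map (· + 1)).sum = ∑ i ∈ S, (i+1) := rfl
  omega

variable {k S}

lemma count_pairMultiset_self (h : k ∉ S) : count (k+1) (pairMultiset k S) = 2 := by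
  unfold pairMultiset
  rw [Multiset.count_cons_self, Multiset.count_cons_self]
  have : k + 1 ∉ S.val.map (· + 1) := by
    intro hc
    obtain ⟨b, hb, hb2⟩ := Multiset.mem_map.1 hc
    have : b = k := by omega
    exact h (by simpa [this] using hb)
  rw [Multiset.count_eq_zero_of_notMem this]

lemma count_pairMultiset_le {v : ℕ} (hv : v ≠ k+1) : count v (pairMultiset k S) ≤ 1 := by
  unfold pairMultiset
  rw [Multiset.count_cons_of_ne hv, Multiset.count_cons_of_ne hv]
  have hnd : (S.val.map (· + 1)).Nodup :=
    Multiset.Nodup.map (fun a b hab => by omega) S.nodup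
  exact Multiset.nodup_iff_count_le_one.1 hnd v

variable (k S) in
def toPartition : Nat.Partition (pairMultiset k S).sum where
  parts := conj (pairMultiset k S)
  parts_pos := fun h => mem_conj_pos _ h
  parts_sum := sum_conj _

lemma missingCount_toPartition (h : k ∉ S) : missingCount (toPartition k S) = 1 := by
  set M := pairMultiset k S with hM
  have hpos : ∀ a ∈ M, 0 < a := pairMultiset_pos k S
  have hL : (conj M).sup = Multiset.card M := by rw [sup_conj, rk_one M hpos]
  have hjump : rk M (k+1) = 2 + rk M (k+1+1) := by
    have := rk_succ_add_count M (k+1)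
    rw [count_pairMultiset_self h] at this
    omega
  have hanti1 : rk M (k+1) ≤ rk M 1 := rk_anti M (by omega)
  have hcard : rk M 1 = Multiset.card M := rk_one M hpos
  set jstar := rk M (k+1+1) + 1 with hjstar
  have hfilter : (Finset.Ico 1 (conj M).sup).filter (fun j => j ∉ conj M) = {jstar} := by
    apply Finset.eq_singleton_iff_unique_mem.2
    constructor
    · refine Finset.mem_filter.2 ⟨Finset.mem_Ico.2 ⟨by omega, by omega⟩, ?_⟩
      rw [not_mem_conj_iff M (by omega)]
      intro v hv hrk
      rcases Nat.lt_or_ge v (k+2) with hc | hc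
      · have : rk M (k+1) ≤ rk M v := rk_anti M (by omega)
        omega
      · have : rk M v ≤ rk M (k+1+1) := rk_anti M (by omega)
        omega
    · intro j hj
      obtain ⟨hjIco, hjnm⟩ := Finset.mem_filter.1 hj
      obtain ⟨hj1, hjL⟩ := Finset.mem_Ico.1 hjIco
      rw [not_mem_conj_iff M hj1] at hjnm
      set w := rk (conj M) j with hw
      have hw1 : 1 ≤ w := by
        rw [hw, galois M le_rfl hj1]
        omega
      have hw2 : j ≤ rk M w := (galois M hw1 hj1).1 le_rfl
      have hw3 : ¬ (j ≤ rk M (w+1)) := by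
        rw [← galois M (by omega : 1 ≤ w + 1) hj1]
        omega
      have hcw : rk M w = count w M + rk M (w+1) := rk_succ_add_count M w
      have hne : rk M w ≠ j := hjnm w hw1
      have hcount2 : 2 ≤ count w M := by omega
      have hwk : w = k + 1 := by
        by_contra hc
        have := count_pairMultiset_le (S := S) hc
        rw [← hM] at this
        omega
      rw [hwk] at hw2 hw3 hne
      omega
  show ((Finset.Ico 1 (conj M).sup).filter (fun j => j ∉ conj M)).card = 1
  rw [hfilter, Finset.card_singleton]

end Pair

lemma conj_parts_form {n : ℕ} (π : n.Partition) (h1 : missingCount π = 1) :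
    ∃ k S, k ∉ S ∧ conj π.parts = pairMultiset k S := by
  set A := π.parts with hA
  set L := A.sup with hLdef
  have hposA : ∀ a ∈ A, 0 < a := fun a ha => π.parts_pos ha
  obtain ⟨κ, hκ⟩ := Finset.card_eq_one.1 h1
  have hκmem : κ ∈ (Finset.Ico 1 L).filter (fun j => j ∉ A) := by
    rw [hκ]; exact Finset.mem_singleton_self κ
  obtain ⟨hκIco, hκnm⟩ := Finset.mem_filter.1 hκmem
  obtain ⟨hκ1, hκL⟩ := Finset.mem_Ico.1 hκIco
  have hfull : ∀ j, 1 ≤ j → j < L → j ≠ κ → j ∈ A := by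
    intro j h1j h2j h3j
    by_contra hc
    have : j ∈ (Finset.Ico 1 L).filter (fun j => j ∉ A) :=
      Finset.mem_filter.2 ⟨Finset.mem_Ico.2 ⟨h1j, h2j⟩, hc⟩
    rw [hκ] at this
    exact h3j (Finset.mem_singleton.1 this)
  have hrkL : 1 ≤ rk A L := (rk_pos_iff_le_sup A (by omega)).2 le_rfl
  set g := fun j => rk A (j+1) with hg
  have hganti : ∀ i j, i ≤ j → g j ≤ g i := fun i j h => rk_anti A (by omega)
  have hstrict : ∀ i j, i < j → j < L → ¬(i = κ - 1 ∧ j = κ) → g j < g i := by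
    intro i j hij hjL hexc
    have hstep : ∀ t, 1 ≤ t → t < L → t ≠ κ → i + 1 ≤ t → t ≤ j → g j < g i := by
      intro t ht1 htL htκ hti htj
      have htA : t ∈ A := hfull t ht1 htL htκ
      have hc1 : 1 ≤ count t A := (Multiset.one_le_count_iff_mem).2 htA
      have e1 : rk A t = count t A + rk A (t+1) := rk_succ_add_count A t
      have e2 : rk A (j+1) ≤ rk A (t+1) := rk_anti A (by omega)
      have e3 : rk A t ≤ rk A (i+1) := rk_anti A (by omega)
      simp only [hg]
      omega
    by_cases hiκ : i + 1 = κ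
    · have hjκ : j ≠ κ := fun hc => hexc ⟨by omega, hc⟩
      have : κ + 1 ≤ j := by omega
      exact hstep (κ+1) (by omega) (by omega) (by omega) (by omega) this
    · exact hstep (i+1) (by omega) (by omega) hiκ le_rfl (by omega)
  -- decompose range L
  have hκmem1 : κ - 1 ∈ Multiset.range L := Multiset.mem_range.2 (by omega)
  have hκmem2 : κ ∈ (Multiset.range L).erase (κ - 1) := by
    rw [Multiset.mem_erase_of_ne (by omega : κ ≠ κ - 1)]
    exact Multiset.mem_range.2 (by omega)
  set rest_idx := ((Multiset.range L).erase (κ - 1)).erase κ with hrest_idx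
  have hdecomp : Multiset.range L = (κ - 1) ::ₘ κ ::ₘ rest_idx := by
    rw [hrest_idx, Multiset.cons_erase hκmem2, Multiset.cons_erase hκmem1]
  have hmem_idx : ∀ i ∈ rest_idx, i < L ∧ i ≠ κ - 1 ∧ i ≠ κ := by
    intro i hi
    have hnd : ((Multiset.range L).erase (κ - 1)).Nodup :=
      (Multiset.nodup_range L).erase _
    have h2 := (Multiset.Nodup.mem_erase_iff hnd).1 hi
    have h3 := (Multiset.Nodup.mem_erase_iff (Multiset.nodup_range L)).1 h2.2
    exact ⟨Multiset.mem_range.1 h3.2, h3.1, h2.1⟩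
  have hMeq : conj A = g (κ-1) ::ₘ g κ ::ₘ rest_idx.map g := by
    rw [conj_eq_map_range, ← hLdef, hdecomp, Multiset.map_cons, Multiset.map_cons]
  have hgκeq : g (κ-1) = g κ := by
    have h0 : count κ A = 0 := Multiset.count_eq_zero_of_notMem hκnm
    have e1 : rk A κ = count κ A + rk A (κ+1) := rk_succ_add_count A κ
    have e2 : κ - 1 + 1 = κ := by omega
    simp only [hg, e2]
    omega
  have hv1 : 1 ≤ g κ := by
    have : rk A L ≤ rk A (κ+1) := rk_anti A (by omega)
    simp only [hg]; omega
  set rest := rest_idx.map g with hrest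
  have hnd_idx : rest_idx.Nodup := ((Multiset.nodup_range L).erase _).erase _
  have hnd_rest : rest.Nodup := by
    refine Multiset.Nodup.map_on ?_ hnd_idx
    intro x hx y hy hxy
    obtain ⟨hxL, hxκ1, hxκ⟩ := hmem_idx x hx
    obtain ⟨hyL, hyκ1, hyκ⟩ := hmem_idx y hy
    by_contra hne
    rcases Nat.lt_or_ge x y with hlt | hge
    · have := hstrict x y hlt hyL (fun hc => hxκ1 hc.1)
      omega
    · have hlt : y < x := by omega
      have := hstrict y x hlt hxL (fun hc => hyκ1 hc.1)
      omega
  have hnotmem : g κ ∉ rest := by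
    intro hc
    obtain ⟨i, hi, hgi⟩ := Multiset.mem_map.1 hc
    obtain ⟨hiL, hiκ1, hiκ⟩ := hmem_idx i hi
    rcases Nat.lt_or_ge i κ with hlt | hge
    · have := hstrict i κ hlt hκL (fun hc => hiκ1 hc.1)
      omega
    · have hlt : κ < i := by omega
      have := hstrict κ i hlt hiL (fun hc => absurd hc.1 (by omega))
      omega
  have hpos_rest : ∀ b ∈ rest, 1 ≤ b := by
    intro b hb
    obtain ⟨i, hi, rfl⟩ := Multiset.mem_map.1 hb
    obtain ⟨hiL, _, _⟩ := hmem_idx i hi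
    have : rk A L ≤ rk A (i+1) := rk_anti A (by omega)
    simp only [hg]; omega
  have hnd_rest' : (rest.map (· - 1)).Nodup := by
    refine Multiset.Nodup.map_on ?_ hnd_rest
    intro x hx y hy hxy
    have := hpos_rest x hx
    have := hpos_rest y hy
    omega
  refine ⟨g κ - 1, ⟨rest.map (· - 1), hnd_rest'⟩, ?_, ?_⟩
  · intro hc
    rw [Finset.mem_mk] at hc
    obtain ⟨x, hx, hx2⟩ := Multiset.mem_map.1 hc
    have h1x := hpos_rest x hx
    have hx2' : x - 1 = g κ - 1 := hx2
    have : x = g κ := by omega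
    exact hnotmem (this ▸ hx)
  · rw [hMeq, hgκeq]
    unfold pairMultiset
    have e1 : g κ - 1 + 1 = g κ := by omega
    rw [e1]
    have hmm : (rest.map (· - 1)).map (· + 1) = rest := by
      rw [Multiset.map_map]
      calc rest.map ((· + 1) ∘ (· - 1)) = rest.map id :=
            Multiset.map_congr rfl (fun x hx => by
              have := hpos_rest x hx
              show x - 1 + 1 = x
              omega)
        _ = rest := Multiset.map_id rest
    congr 1
    congr 1
    exact hmm.symm

abbrev PairT := {p : ℕ × Finset ℕ // p.1 ∉ p.2}

abbrev SigT := Σ n : ℕ, {π : n.Partition // missingCount π = 1}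

def Phi (p : PairT) : SigT :=
  ⟨(pairMultiset p.1.1 p.1.2).sum, ⟨toPartition p.1.1 p.1.2, missingCount_toPartition p.2⟩⟩

lemma sig_ext {n n' : ℕ} {π : n.Partition} {π' : n'.Partition}
    {h : missingCount π = 1} {h' : missingCount π' = 1}
    (hn : n = n') (hp : π.parts = π'.parts) :
    (⟨n, π, h⟩ : SigT) = ⟨n', π', h'⟩ := by
  subst hn
  have : π = π' := Nat.Partition.ext hp
  subst this
  rfl

lemma Phi_injective : Function.Injective Phi := by
  intro p p' h
  have hparts : conj (pairMultiset p.1.1 p.1.2) = conj (pairMultiset p'.1.1 p'.1.2) := by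
    exact congrArg (fun x : SigT => x.2.1.parts) h
  have hpos : ∀ a ∈ pairMultiset p.1.1 p.1.2, 0 < a := pairMultiset_pos _ _
  have hpos' : ∀ a ∈ pairMultiset p'.1.1 p'.1.2, 0 < a := pairMultiset_pos _ _
  have hM : pairMultiset p.1.1 p.1.2 = pairMultiset p'.1.1 p'.1.2 := by
    rw [← conj_conj _ hpos, ← conj_conj _ hpos', hparts]
  have hk : p.1.1 = p'.1.1 := by
    by_contra hc
    have h2 : count (p.1.1 + 1) (pairMultiset p.1.1 p.1.2) = 2 :=
      count_pairMultiset_self p.2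
    have h1 : count (p.1.1 + 1) (pairMultiset p'.1.1 p'.1.2) ≤ 1 :=
      count_pairMultiset_le (by omega)
    rw [hM] at h2
    omega
  have hS : p.1.2 = p'.1.2 := by
    unfold pairMultiset at hM
    rw [hk] at hM
    have h2 := (Multiset.cons_inj_right _).1 ((Multiset.cons_inj_right _).1 hM)
    have h3 := Multiset.map_injective (f := (· + 1 : ℕ → ℕ)) (add_left_injective 1) h2
    exact Finset.val_injective h3
  exact Subtype.ext (Prod.ext hk hS)

lemma Phi_surjective : Function.Surjective Phi := by
  rintro ⟨n, π, hπ⟩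
  obtain ⟨k, S, hkS, hconj⟩ := conj_parts_form π hπ
  refine ⟨⟨(k, S), hkS⟩, ?_⟩
  have hposA : ∀ a ∈ π.parts, 0 < a := fun a ha => π.parts_pos ha
  have hsum : (pairMultiset k S).sum = n := by
    rw [← hconj, sum_conj]
    exact π.parts_sum
  have hparts : (toPartition k S).parts = π.parts := by
    show conj (pairMultiset k S) = π.parts
    rw [← hconj, conj_conj _ hposA]
  exact sig_ext hsum hparts

noncomputable def E : PairT ≃ SigT := Equiv.ofBijective Phi ⟨Phi_injective, Phi_surjective⟩

lemma Phi_fst (p : PairT) : (Phi p).1 = 2 * (p.1.1 + 1) + ∑ i ∈ p.1.2, (i + 1) := by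
  show (pairMultiset p.1.1 p.1.2).sum = _
  rw [pairMultiset_sum]


open Finset Filter


open Finset Filter

lemma prod_one_add {f : ℕ → ℂ} (F : Finset ℕ) :
    ∏ i ∈ F, (1 + f i) = ∑ S ∈ F.powerset, ∏ i ∈ S, f i := by
  have := Finset.prod_add f (fun _ => (1:ℂ)) F
  simpa [add_comm] using this

lemma tendsto_powerset_atTop :
    Tendsto (Finset.powerset : Finset ℕ → Finset (Finset ℕ)) atTop atTop := by
  apply tendsto_atTop_atTop_of_monotone
  · intro a b hab
    exact Finset.powerset_mono.2 hab
  · intro T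
    refine ⟨T.sup id, fun S hS => ?_⟩
    exact Finset.mem_powerset.2 (Finset.le_sup (f := id) hS)

lemma summable_prod_finset {r : ℕ → ℝ} (h0 : ∀ i, 0 ≤ r i) (hr : Summable r) :
    Summable (fun S : Finset ℕ => ∏ i ∈ S, r i) := by
  apply summable_of_sum_le (c := Real.exp (∑' i, r i))
  · intro S
    exact Finset.prod_nonneg (fun i _ => h0 i)
  · intro T
    calc ∑ S ∈ T, ∏ i ∈ S, r i
        ≤ ∑ S ∈ (T.sup id).powerset, ∏ i ∈ S, r i := by
          apply Finset.sum_le_sum_of_subset_of_nonneg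
          · intro S hS
            exact Finset.mem_powerset.2 (Finset.le_sup (f := id) hS)
          · intro S _ _
            exact Finset.prod_nonneg (fun i _ => h0 i)
      _ = ∏ i ∈ T.sup id, (1 + r i) := by
          have := Finset.prod_add r (fun _ => (1:ℝ)) (T.sup id)
          simpa [add_comm] using this.symm
      _ ≤ ∏ i ∈ T.sup id, Real.exp (r i) := by
          apply Finset.prod_le_prod
          · intro i _
            have := h0 i; linarith
          · intro i _
            rw [add_comm]
            exact Real.add_one_le_exp (r i)
      _ = Real.exp (∑ i ∈ T.sup id, r i) := (Real.exp_sum _ _).symm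
      _ ≤ Real.exp (∑' i, r i) := by
          apply Real.exp_le_exp.2
          exact Summable.sum_le_tsum _ (fun i _ => h0 i) hr

lemma hasProd_one_add {f : ℕ → ℂ}
    (h : Summable (fun S : Finset ℕ => ∏ i ∈ S, f i)) :
    HasProd (fun i => 1 + f i) (∑' S : Finset ℕ, ∏ i ∈ S, f i) := by
  have hs := h.hasSum
  unfold HasSum at hs
  unfold HasProd
  have := hs.comp tendsto_powerset_atTop
  apply this.congr
  intro F
  exact (prod_one_add F).symm

section Split
variable {f : ℕ → ℂ} (k : ℕ)

lemma split_tsum (h : Summable (fun S : Finset ℕ => ∏ i ∈ S, f i)) :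
    (∑' S : Finset ℕ, ∏ i ∈ S, f i) =
      (1 + f k) * ∑' S : Finset ℕ, ∏ i ∈ S, (if i = k then 0 else f i) := by
  classical
  set g : Finset ℕ → ℂ := fun S => ∏ i ∈ S, f i with hg
  set s : Set (Finset ℕ) := {S | k ∉ S} with hset
  have hind : (fun S : Finset ℕ => ∏ i ∈ S, (if i = k then 0 else f i)) = s.indicator g := by
    funext S
    by_cases hk : k ∈ S
    · rw [Set.indicator_of_notMem (by simpa [hset] using hk)]
      exact Finset.prod_eq_zero hk (by simp)
    · rw [Set.indicator_of_mem (by simpa [hset] using hk)]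
      exact Finset.prod_congr rfl (fun i hi => by
        have : i ≠ k := fun hik => hk (hik ▸ hi)
        simp [this])
  have hsub : Summable (fun x : s => g x) := h.subtype s
  have hsubc : Summable (fun x : (sᶜ : Set (Finset ℕ)) => g x) := h.subtype sᶜ
  have hsplit := Summable.tsum_add_tsum_compl (f := g) hsub hsubc
  -- equivalence between s and sᶜ
  let e : s ≃ (sᶜ : Set (Finset ℕ)) :=
    { toFun := fun x => ⟨insert k x.1, by simp [hset]⟩
      invFun := fun y => ⟨y.1.erase k, by simp [hset]⟩
      left_inv := fun x => Subtype.ext (Finset.erase_insert x.2)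
      right_inv := fun y => Subtype.ext (Finset.insert_erase (not_not.1 y.2)) }
  have hcompl : (∑' x : (sᶜ : Set (Finset ℕ)), g x) = f k * ∑' x : s, g x := by
    rw [← e.tsum_eq (fun y : (sᶜ : Set (Finset ℕ)) => g y)]
    have hc : ∀ x : s, g ((e x : Finset ℕ)) = f k * g x.1 := by
      intro x
      show g (insert k x.1) = f k * g x.1
      rw [hg]
      exact Finset.prod_insert x.2
    rw [tsum_congr hc, tsum_mul_left]
  have hrestr : (∑' S : Finset ℕ, ∏ i ∈ S, (if i = k then 0 else f i)) = ∑' x : s, g x := by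
    rw [hind]
    exact (_root_.tsum_subtype s g).symm
  rw [hrestr, ← hsplit, hcompl]
  ring

lemma summable_fprime {r : ℕ → ℝ} (h0 : ∀ i, 0 ≤ r i) (hr : Summable r)
    (hfr : ∀ i, ‖f i‖ ≤ r i) :
    Summable (fun S : Finset ℕ => ∏ i ∈ S, (if i = k then 0 else f i)) := by
  apply Summable.of_norm_bounded (summable_prod_finset h0 hr)
  intro S
  rw [norm_prod]
  apply Finset.prod_le_prod
  · intro i _; positivity
  · intro i _
    by_cases hik : i = k
    · simp [hik]
      exact h0 k
    · simp only [hik, if_false]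
      exact hfr i

end Split

lemma summable_pow_succ {x : ℝ} (h0 : 0 ≤ x) (h1 : x < 1) :
    Summable (fun k : ℕ => x ^ (k + 1)) := by
  have := (summable_geometric_of_lt_one h0 h1).mul_left x
  apply this.congr
  intro k
  rw [pow_succ, mul_comm]


end OneGap

set_option maxHeartbeats 1000000 in
open OneGap in
set_option maxHeartbeats 1000000 in
theorem statement3 (q : ℂ) (hq : ‖q‖ < 1) :
    ∑' n : ℕ, (Pcount n 1 : ℂ) * q ^ n =
      (∏' k : ℕ, (1 + q ^ (k + 1))) * ∑' k : ℕ, q ^ (2 * (k + 1)) / (1 + q ^ (k + 1)) := by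
  classical
  rcases eq_or_ne q 0 with rfl | hq0
  · -- q = 0 case
    have h1 : ∑' n : ℕ, (Pcount n 1 : ℂ) * (0:ℂ) ^ n = (Pcount 0 1 : ℂ) := by
      rw [tsum_eq_single 0 (fun n hn => by simp [zero_pow hn])]
      simp
    have h2 : Pcount 0 1 = 0 := by
      rw [Pcount, Fintype.card_eq_zero_iff]
      constructor
      rintro ⟨π, hπ⟩
      have hp : π.parts = 0 := by
        by_cases h : π.parts = 0
        · exact h
        · obtain ⟨a, ha⟩ := Multiset.exists_mem_of_ne_zero h
          have h1 := π.parts_pos ha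
          have hsum := π.parts_sum
          have h2 : a ≤ π.parts.sum := Multiset.le_sum_of_mem ha
          omega
      rw [missingCount, hp] at hπ
      simp at hπ
    rw [h1, h2]
    simp
  -- main case
  set f : ℕ → ℂ := fun i => q ^ (i+1) with hf
  set r : ℕ → ℝ := fun i => ‖q‖ ^ (i+1) with hrdef
  have h0 : ∀ i, 0 ≤ r i := fun i => by positivity
  have hr : Summable r := summable_pow_succ (norm_nonneg q) hq
  have hfr : ∀ i, ‖f i‖ = r i := fun i => by rw [hf, hrdef]; exact norm_pow q (i+1)
  have hgsum : Summable (fun S : Finset ℕ => ∏ i ∈ S, f i) := by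
    apply Summable.of_norm
    apply (summable_prod_finset h0 hr).congr
    intro S
    rw [norm_prod]
    exact Finset.prod_congr rfl (fun i _ => (hfr i).symm)
  set P : ℂ := ∑' S : Finset ℕ, ∏ i ∈ S, f i with hP
  have hProd : HasProd (fun i => 1 + f i) P := hasProd_one_add hgsum
  have htprod : (∏' k : ℕ, (1 + q ^ (k + 1))) = P := hProd.tprod_eq
  have hlt1 : ∀ k : ℕ, ‖f k‖ < 1 := fun k => by
    rw [hfr, hrdef]
    exact pow_lt_one₀ (norm_nonneg q) hq (Nat.succ_ne_zero k)
  have hne : ∀ k : ℕ, 1 + f k ≠ 0 := by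
    intro k hc
    have hfk : f k = -1 := by linear_combination hc
    have h1 := hlt1 k
    rw [hfk] at h1
    simp at h1
  -- h and its summability
  set h : ℕ × Finset ℕ → ℂ :=
    fun p => q ^ (2 * (p.1 + 1)) * ∏ i ∈ p.2, (if i = p.1 then 0 else q ^ (i+1)) with hh
  have hsum2 : Summable (fun p : ℕ × Finset ℕ => ‖q‖ ^ (2 * (p.1 + 1)) * ∏ i ∈ p.2, r i) := by
    refine Summable.mul_of_nonneg (f := fun k : ℕ => ‖q‖ ^ (2 * (k + 1)))
      (g := fun S : Finset ℕ => ∏ i ∈ S, r i)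
      ?_ (summable_prod_finset h0 hr) (fun k => by positivity)
      (fun S => Finset.prod_nonneg (fun i _ => h0 i))
    have hsq : Summable (fun k : ℕ => (‖q‖^2) ^ (k+1)) :=
      summable_pow_succ (by positivity) (by nlinarith [norm_nonneg q])
    apply hsq.congr
    intro k
    rw [← pow_mul]
  have hnormle : ∀ p : ℕ × Finset ℕ,
      ‖h p‖ ≤ ‖q‖ ^ (2 * (p.1 + 1)) * ∏ i ∈ p.2, r i := by
    intro p
    rw [hh]
    simp only
    rw [norm_mul, norm_pow, norm_prod]
    apply mul_le_mul_of_nonneg_left _ (by positivity)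
    apply Finset.prod_le_prod (fun i _ => norm_nonneg _)
    intro i _
    by_cases hik : i = p.1
    · simp only [hik, if_true]
      simp only [norm_zero]
      exact h0 p.1
    · simp only [hik, if_false]
      rw [← hfr i]
  have hsumh : Summable h := Summable.of_norm_bounded hsum2 hnormle
  -- RHS chain
  have step1 : (∏' k : ℕ, (1 + q ^ (k + 1))) * ∑' k : ℕ, q ^ (2 * (k + 1)) / (1 + q ^ (k + 1))
      = ∑' k : ℕ, P * (q ^ (2 * (k + 1)) / (1 + f k)) := by
    rw [htprod, ← tsum_mul_left]
  have step2 : ∀ k : ℕ, P * (q ^ (2 * (k + 1)) / (1 + f k))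
      = ∑' S : Finset ℕ, h (k, S) := by
    intro k
    have hsp := split_tsum k hgsum
    rw [hP, hsp]
    have : (1 + f k) * (∑' S : Finset ℕ, ∏ i ∈ S, (if i = k then 0 else f i))
        * (q ^ (2 * (k + 1)) / (1 + f k))
        = q ^ (2 * (k + 1)) * ∑' S : Finset ℕ, ∏ i ∈ S, (if i = k then 0 else f i) := by
      field_simp [hne k]
    rw [this, ← tsum_mul_left]
  have step3 : ∑' k : ℕ, (∑' S : Finset ℕ, h (k, S)) = ∑' p : ℕ × Finset ℕ, h p :=
    (Summable.tsum_prod hsumh).symm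
  -- restrict to support
  have hinj : Function.Injective (Subtype.val : PairT → ℕ × Finset ℕ) := Subtype.val_injective
  have hsupp : Function.support h ⊆ Set.range (Subtype.val : PairT → ℕ × Finset ℕ) := by
    intro p hp
    have : p.1 ∉ p.2 := by
      intro hmem
      apply hp
      rw [hh]
      simp only
      rw [Finset.prod_eq_zero hmem (by simp)]
      ring
    exact ⟨⟨p, this⟩, rfl⟩
  have step4 : ∑' p : ℕ × Finset ℕ, h p = ∑' x : PairT, h x.1 :=
    (hinj.tsum_eq hsupp).symm
  -- identify with q ^ weight
  have hweight : ∀ x : PairT, h x.1 = q ^ ((E x).1) := by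
    intro x
    have hx : x.1.1 ∉ x.1.2 := x.2
    have hE1 : (E x).1 = 2 * (x.1.1 + 1) + ∑ i ∈ x.1.2, (i + 1) := Phi_fst x
    rw [hh, hE1]
    simp only
    rw [pow_add]
    congr 1
    calc (∏ i ∈ x.1.2, if i = x.1.1 then 0 else q ^ (i+1))
        = ∏ i ∈ x.1.2, q ^ (i+1) := by
          apply Finset.prod_congr rfl
          intro i hi
          have : i ≠ x.1.1 := fun hc => hx (hc ▸ hi)
          simp [this]
      _ = q ^ (∑ i ∈ x.1.2, (i+1)) := Finset.prod_pow_eq_pow_sum _ _ _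
  have step5 : ∑' x : PairT, h x.1 = ∑' y : SigT, q ^ y.1 := by
    rw [tsum_congr hweight]
    exact E.tsum_eq (fun y : SigT => q ^ y.1)
  -- summability of F over SigT
  have hFsum : Summable (fun y : SigT => q ^ y.1) := by
    have h1 : Summable (fun x : PairT => h x.1) := hsumh.comp_injective hinj
    have h2 : Summable (fun x : PairT => q ^ ((E x).1)) := h1.congr hweight
    exact (E.summable_iff (f := fun y : SigT => q ^ y.1)).1 h2
  have step6 : ∑' y : SigT, q ^ y.1
      = ∑' n : ℕ, ∑' _ : {π : n.Partition // missingCount π = 1}, q ^ n :=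
    Summable.tsum_sigma hFsum
  have step7 : ∀ n : ℕ, (∑' _ : {π : n.Partition // missingCount π = 1}, q ^ n)
      = (Pcount n 1 : ℂ) * q ^ n := by
    intro n
    rw [tsum_fintype]
    rw [Finset.sum_const, Finset.card_univ]
    rw [nsmul_eq_mul]
    rfl
  rw [step1, tsum_congr step2, step3, step4, step5, step6, tsum_congr step7]
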